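/- Let v_1, …, v_m be vectors in ℝ^n and c_1, …, c_m real numbers. Suppose there exist ε > 0 and a convex function g : ℝ^n → ℝ such that g(t • v_i) = t * c_i for every i and every t ∈ [0, ε], and suppose there exist strictly positive real numbers ω_1, …, ω_m with Σ_i ω_i • v_i = 0 and Σ_i ω_i * c_i = 0. Then there exists a linear functional L : ℝ^n → ℝ with L(v_i) = c_i for all i. -/

import Mathlib

/-- If the positively homogeneous extension of the values `c i` along the
rays spanned by `v i` is locally near the origin the restriction of a convex function
on `ℝ^n`, and there are strictly positive weights `ω i` with `∑ ω i • v i = 0` and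
`∑ ω i * c i = 0`, then the values `c i` are induced by a globally linear functional. -/
theorem convex_with_zero_divisor_is_linear {n m : ℕ}
    (v : Fin m → (Fin n → ℝ)) (c : Fin m → ℝ)
    (hconv : ∃ ε > (0 : ℝ), ∃ g : (Fin n → ℝ) → ℝ, ConvexOn ℝ Set.univ g ∧
      ∀ i : Fin m, ∀ t ∈ Set.Icc (0 : ℝ) ε, g (t • v i) = t * c i)
    (hbal : ∃ ω : Fin m → ℝ, (∀ i, 0 < ω i) ∧ (∑ i, ω i • v i = 0) ∧
      (∑ i, ω i * c i = 0)) :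
    ∃ L : (Fin n → ℝ) →ₗ[ℝ] ℝ, ∀ i, L (v i) = c i := by
  obtain ⟨ε, hε, g, hg, hgv⟩ := hconv
  obtain ⟨ω, hω, hωv, hωc⟩ := hbal
  -- Key: nonnegative relations give nonnegative c-combinations
  have key : ∀ a : Fin m → ℝ, (∀ i, 0 ≤ a i) → ∑ i, a i • v i = 0 →
      0 ≤ ∑ i, a i * c i := by
    intro a ha hav
    by_cases hS : ∑ i, a i = 0
    · have hz : ∀ i ∈ Finset.univ, a i = 0 :=
        (Finset.sum_eq_zero_iff_of_nonneg (fun i _ => ha i)).mp hS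
      have : ∑ i, a i * c i = 0 :=
        Finset.sum_eq_zero fun i hi => by rw [hz i hi, zero_mul]
      exact this.ge
    · have hS' : 0 < ∑ i, a i :=
        lt_of_le_of_ne (Finset.sum_nonneg fun i _ => ha i) (Ne.symm hS)
      set S := ∑ i, a i with hSdef
      -- there is some i with a i ≠ 0, so m > 0
      obtain ⟨i₀, -, hi₀⟩ := Finset.exists_ne_zero_of_sum_ne_zero hS
      have hg0 : g 0 = 0 := by
        have := hgv i₀ 0 ⟨le_refl 0, le_of_lt hε⟩
        simpa using this
      have hJ := hg.map_sum_le (t := Finset.univ) (w := fun i => a i / S)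
        (p := fun i => ε • v i)
        (fun i _ => div_nonneg (ha i) hS'.le)
        (by rw [← Finset.sum_div]; field_simp; exact hSdef.symm)
        (fun i _ => Set.mem_univ _)
      have h1 : ∑ i, (a i / S) • (ε • v i) = (0 : Fin n → ℝ) := by
        have : ∑ i, (a i / S) • (ε • v i) = (ε / S) • ∑ i, a i • v i := by
          rw [Finset.smul_sum]
          refine Finset.sum_congr rfl fun i _ => ?_
          simp only [smul_smul]
          congr 1; ring
        rw [this, hav, smul_zero]
      rw [h1, hg0] at hJ
      have h2 : ∀ i ∈ Finset.univ, (a i / S) • g (ε • v i) = (ε / S) * (a i * c i) := by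
        intro i _
        have := hgv i ε ⟨hε.le, le_refl ε⟩
        rw [this]; simp [smul_eq_mul]; ring
      rw [Finset.sum_congr rfl h2, ← Finset.mul_sum] at hJ
      have hεS : 0 < ε / S := div_pos hε hS'
      nlinarith [hJ]
  -- relations (any sign) give zero c-combinations
  have key2 : ∀ b : Fin m → ℝ, ∑ i, b i • v i = 0 → ∑ i, b i * c i = 0 := by
    intro b hb
    have main : ∀ b : Fin m → ℝ, ∑ i, b i • v i = 0 → 0 ≤ ∑ i, b i * c i := by
      intro b hb
      set M := ∑ j, |b j| / ω j with hM
      have hMnn : ∀ i, |b i| ≤ M * ω i := by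
        intro i
        have h1 : |b i| / ω i ≤ M :=
          Finset.single_le_sum (f := fun j => |b j| / ω j)
            (fun j _ => div_nonneg (abs_nonneg _) (hω j).le) (Finset.mem_univ i)
        calc |b i| = (|b i| / ω i) * ω i := (div_mul_cancel₀ _ (hω i).ne').symm
          _ ≤ M * ω i := mul_le_mul_of_nonneg_right h1 (hω i).le
      have ha : ∀ i, 0 ≤ b i + M * ω i := fun i => by
        have := hMnn i; have := neg_abs_le (b i); linarith
      have hav : ∑ i, (b i + M * ω i) • v i = 0 := by
        have : ∑ i, (b i + M * ω i) • v i
            = ∑ i, b i • v i + M • ∑ i, ω i • v i := by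
          rw [Finset.smul_sum, ← Finset.sum_add_distrib]
          refine Finset.sum_congr rfl fun i _ => ?_
          rw [add_smul, smul_smul]
        rw [this, hb, hωv, smul_zero, add_zero]
      have := key (fun i => b i + M * ω i) ha hav
      have hsum : ∑ i, (b i + M * ω i) * c i
          = ∑ i, b i * c i + M * ∑ i, ω i * c i := by
        rw [Finset.mul_sum, ← Finset.sum_add_distrib]
        refine Finset.sum_congr rfl fun i _ => ?_; ring
      rw [hsum, hωc, mul_zero, add_zero] at this
      exact this
    have h1 := main b hb
    have h2 := main (fun i => -b i) (by
      simpa [neg_smul, Finset.sum_neg_distrib] using congrArg Neg.neg hb)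
    simp only [neg_mul, Finset.sum_neg_distrib] at h2
    linarith
  -- build the linear map
  classical
  let π : (Fin m → ℝ) →ₗ[ℝ] (Fin n → ℝ) :=
    { toFun := fun a => ∑ i, a i • v i
      map_add' := fun a b => by
        simp [add_smul, Finset.sum_add_distrib]
      map_smul' := fun r a => by
        simp [Finset.smul_sum, smul_smul] }
  let ψ : (Fin m → ℝ) →ₗ[ℝ] ℝ :=
    { toFun := fun a => ∑ i, a i * c i
      map_add' := fun a b => by
        simp [add_mul, Finset.sum_add_distrib]
      map_smul' := fun r a => by
        simp [Finset.mul_sum, mul_assoc] }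
  have hker : LinearMap.ker π ≤ LinearMap.ker ψ := by
    intro b hbmem
    exact key2 b hbmem
  let f₀ : ((Fin m → ℝ) ⧸ LinearMap.ker π) →ₗ[ℝ] ℝ :=
    (LinearMap.ker π).liftQ ψ hker
  let e := π.quotKerEquivRange
  let f : (LinearMap.range π) →ₗ[ℝ] ℝ := f₀.comp (e.symm : LinearMap.range π →ₗ[ℝ] _)
  obtain ⟨L, hL⟩ := LinearMap.exists_extend f
  refine ⟨L, fun i => ?_⟩
  have hv : v i ∈ LinearMap.range π := ⟨Pi.single i 1, by
    simp [π, Pi.single_apply, Finset.sum_ite_eq', ite_smul]⟩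
  have hLv : L (v i) = f ⟨v i, hv⟩ := by
    have := congrFun (congrArg (fun h => h.toFun) hL) ⟨v i, hv⟩
    simpa using this
  rw [hLv]
  have he : e ((LinearMap.ker π).mkQ (Pi.single i 1)) = ⟨v i, hv⟩ := by
    apply Subtype.ext
    simp [e, LinearMap.quotKerEquivRange, π, Pi.single_apply, Finset.sum_ite_eq', ite_smul]
  have : f ⟨v i, hv⟩ = f₀ ((LinearMap.ker π).mkQ (Pi.single i 1)) := by
    simp only [f, LinearMap.comp_apply]
    rw [← he]
    simp [LinearEquiv.symm_apply_apply]
  rw [this]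
  simp [f₀, ψ, Submodule.liftQ_apply, Pi.single_apply, Finset.sum_ite_eq', ite_mul]
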